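/- Let t ≥ 2 and r ≥ 3 be integers and let a, b be positive integers with a + b = r and b ≥ 2 (i.e., a < r − 1). Suppose α, β are reals with 0 < α < 2/(t+1) < β < 1, g(α) = g(β) = φ ≤ 0, and a·α + b·β = 1. Then there exist φ′ with φ < φ′ < 0 and reals α′, β′ with 0 < α′ < 2/(t+1) < β′ < 1, g(α′) = g(β′) = φ′, (a+1)·α′ + (b−1)·β′ = 1, and a·f(α) + b·f(β) < (a+1)·f(α′) + (b−1)·f(β′). -/

import Mathlib

/-- `f(ρ) = (1-ρ)^t·ρ`. -/
noncomputable def ffun (t : ℕ) (ρ : ℝ) : ℝ := (1 - ρ) ^ t * ρ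

/-- `g = f'`. -/
noncomputable def gfun (t : ℕ) (ρ : ℝ) : ℝ := (1 - ρ) ^ (t - 1) * (1 - ((t : ℝ) + 1) * ρ)

lemma gfun_eq (k : ℕ) (x : ℝ) : gfun (k+2) x = (1-x)^(k+1) * (1 - ((k:ℝ)+3)*x) := by
  unfold gfun; push_cast; ring_nf

lemma one_sub_hasDerivAt (x : ℝ) : HasDerivAt (fun y : ℝ => 1 - y) (-1) x := by
  simpa using (hasDerivAt_id x).const_sub 1

lemma ffun_hasDerivAt (k : ℕ) (x : ℝ) : HasDerivAt (ffun (k+2)) (gfun (k+2) x) x := by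
  have h1 := (one_sub_hasDerivAt x).pow (k+2)
  have h2 := h1.mul (hasDerivAt_id x)
  have h3 : HasDerivAt (ffun (k+2))
      (↑(k + 2) * (1 - x) ^ (k + 2 - 1) * -1 * x + (1-x)^(k+2) * 1) x := h2
  refine h3.congr_deriv ?_
  rw [gfun_eq]
  have he : (1-x)^(k+2) = (1-x)^(k+1) * (1-x) := by ring
  have he2 : (k + 2 - 1) = k+1 := rfl
  rw [he, he2]; push_cast; ring

lemma gfun_hasDerivAt (k : ℕ) (x : ℝ) :
    HasDerivAt (gfun (k+2)) (((k:ℝ)+2) * (1-x)^k * (((k:ℝ)+3)*x - 2)) x := by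
  have heq : gfun (k+2) = fun y : ℝ => (1-y)^(k+1) * (1 - ((k:ℝ)+3)*y) := by
    funext y; exact gfun_eq k y
  rw [heq]
  have h1 := (one_sub_hasDerivAt x).pow (k+1)
  have h2 : HasDerivAt (fun y : ℝ => 1 - ((k:ℝ)+3)*y) (-((k:ℝ)+3)) x := by
    simpa using ((hasDerivAt_id x).const_mul ((k:ℝ)+3)).const_sub 1
  have h3 := h1.mul h2
  refine h3.congr_deriv ?_
  have he : (1-x)^(k+1) = (1-x)^k * (1-x) := by ring
  have he2 : (k + 1 - 1) = k := rfl
  rw [he2]; simp only [Pi.pow_apply]; rw [he]; push_cast; ring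

lemma gfun_cont (k : ℕ) : Continuous (gfun (k+2)) := by
  unfold gfun; fun_prop

lemma ffun_cont (k : ℕ) : Continuous (ffun (k+2)) := by
  unfold ffun; fun_prop

lemma gfun_strictAntiOn (k : ℕ) :
    StrictAntiOn (gfun (k+2)) (Set.Icc 0 (2/((k:ℝ)+3))) := by
  have hT : (0:ℝ) < (k:ℝ)+3 := by positivity
  apply strictAntiOn_of_deriv_neg (convex_Icc _ _) (gfun_cont k).continuousOn
  intro x hx
  rw [interior_Icc] at hx
  obtain ⟨hx0, hx2⟩ := hx
  rw [(gfun_hasDerivAt k x).deriv]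
  have hx1 : x < 1 := by
    calc x < 2/((k:ℝ)+3) := hx2
    _ ≤ 2/3 := by
      apply div_le_div_of_nonneg_left (by norm_num) (by norm_num)
      have : (0:ℝ) ≤ (k:ℝ) := Nat.cast_nonneg k
      linarith
    _ < 1 := by norm_num
  have h1 : (0:ℝ) < (1-x)^k := pow_pos (by linarith) k
  have h2 : ((k:ℝ)+3)*x - 2 < 0 := by
    have := (lt_div_iff₀ hT).mp hx2
    linarith [this]
  nlinarith [mul_pos (show (0:ℝ) < (k:ℝ)+2 by positivity) h1]

lemma gfun_strictMonoOn (k : ℕ) :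
    StrictMonoOn (gfun (k+2)) (Set.Icc (2/((k:ℝ)+3)) 1) := by
  have hT : (0:ℝ) < (k:ℝ)+3 := by positivity
  apply strictMonoOn_of_deriv_pos (convex_Icc _ _) (gfun_cont k).continuousOn
  intro x hx
  rw [interior_Icc] at hx
  obtain ⟨hx2, hx1⟩ := hx
  rw [(gfun_hasDerivAt k x).deriv]
  have h1 : (0:ℝ) < (1-x)^k := pow_pos (by linarith) k
  have h2 : 0 < ((k:ℝ)+3)*x - 2 := by
    have := (div_lt_iff₀ hT).mp hx2
    linarith [this]
  positivity


set_option maxHeartbeats 1000000 in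
/-- Lemma 3.7: a skew critical point with `a < r - 1` is beaten by one with
`a + 1` copies of `α'` and a larger `φ` value. -/
theorem improve_skew_solution (t r : ℕ) (ht : 2 ≤ t) (hr : 3 ≤ r)
    (a b : ℕ) (ha : 1 ≤ a) (hb : 2 ≤ b) (hab : a + b = r)
    (α β φ : ℝ) (hα0 : 0 < α) (hα : α < 2 / ((t : ℝ) + 1))
    (hβ : 2 / ((t : ℝ) + 1) < β) (hβ1 : β < 1)
    (hgα : gfun t α = φ) (hgβ : gfun t β = φ) (hφ : φ ≤ 0)
    (hsum : (a : ℝ) * α + (b : ℝ) * β = 1) :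
    ∃ φ' α' β' : ℝ, φ < φ' ∧ φ' < 0 ∧
      0 < α' ∧ α' < 2 / ((t : ℝ) + 1) ∧ 2 / ((t : ℝ) + 1) < β' ∧ β' < 1 ∧
      gfun t α' = φ' ∧ gfun t β' = φ' ∧
      ((a : ℝ) + 1) * α' + ((b : ℝ) - 1) * β' = 1 ∧
      (a : ℝ) * ffun t α + (b : ℝ) * ffun t β
        < ((a : ℝ) + 1) * ffun t α' + ((b : ℝ) - 1) * ffun t β' := by
  obtain ⟨k, rfl⟩ : ∃ k, t = k + 2 := ⟨t - 2, by omega⟩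
  have hceq : 2 / (((k+2:ℕ) : ℝ) + 1) = 2 / ((k:ℝ)+3) := by push_cast; ring_nf
  rw [hceq] at hα hβ ⊢
  have hT : (0:ℝ) < (k:ℝ)+3 := by positivity
  have hk0 : (0:ℝ) ≤ (k:ℝ) := Nat.cast_nonneg k
  have hc1 : 2/((k:ℝ)+3) < 1 := by rw [div_lt_one hT]; linarith
  have hα1 : α < 1 := hα.trans hc1
  have hαβ : α < β := hα.trans hβ
  have ha1 : (1:ℝ) ≤ (a:ℝ) := by exact_mod_cast ha
  have hb2 : (2:ℝ) ≤ (b:ℝ) := by exact_mod_cast hb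
  have hBpos : (0:ℝ) < (b:ℝ) - 1 := by linarith
  have hApos : (0:ℝ) < (a:ℝ) + 1 := by linarith
  have huc : 1/((k:ℝ)+3) < 2/((k:ℝ)+3) := by
    rw [div_lt_div_iff₀ hT hT]; linarith
  have hu0 : (0:ℝ) < 1/((k:ℝ)+3) := by positivity
  -- g is negative strictly between 1/(k+3) and 1
  have hgneg : ∀ x : ℝ, 1/((k:ℝ)+3) < x → x < 1 → gfun (k+2) x < 0 := by
    intro x h1 h2
    rw [gfun_eq]
    apply mul_neg_of_pos_of_neg (pow_pos (by linarith) _)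
    rw [div_lt_iff₀ hT] at h1
    nlinarith
  have hφ0 : φ < 0 := by
    rw [← hgβ]
    exact hgneg β (huc.trans hβ) hβ1
  -- α > 1/(k+3)
  have hTα : 1/((k:ℝ)+3) < α := by
    rw [div_lt_iff₀ hT]
    by_contra h
    push_neg at h
    have hp : (0:ℝ) < (1-α)^(k+1) := pow_pos (by linarith) _
    have h2 : 0 ≤ gfun (k+2) α := by
      rw [gfun_eq]
      apply mul_nonneg hp.le
      nlinarith
    rw [hgα] at h2; linarith
  -- the line parametrization
  set y : ℝ → ℝ := fun x => (1 - ((a:ℝ)+1)*x)/((b:ℝ)-1) with hydef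
  have hyval : ∀ x : ℝ, ((b:ℝ)-1) * y x = 1 - ((a:ℝ)+1)*x := by
    intro x
    rw [hydef]
    field_simp
  have hylt1 : ∀ x : ℝ, 0 < x → y x < 1 := by
    intro x hx
    rw [hydef]
    rw [div_lt_one hBpos]
    nlinarith
  have hyanti : ∀ x1 x2 : ℝ, x1 < x2 → y x2 < y x1 := by
    intro x1 x2 h
    rw [hydef]
    rw [div_lt_div_iff₀ hBpos hBpos]
    nlinarith [mul_pos (mul_pos hApos (sub_pos.mpr h)) hBpos]
  have hyαβ : β < y α := by
    rw [hydef]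
    rw [lt_div_iff₀ hBpos]
    nlinarith
  have hyα1 : y α < 1 := hylt1 α hα0
  have hycont : Continuous y := by
    rw [hydef]; fun_prop
  -- base inequality
  have hRd : ∀ x : ℝ, HasDerivAt (fun z : ℝ => ffun (k+2) z - φ * z) (gfun (k+2) x - φ) x := by
    intro x
    have h1 : HasDerivAt (fun z : ℝ => φ * z) φ x := by
      simpa using (hasDerivAt_id x).const_mul φ
    exact (ffun_hasDerivAt k x).sub h1
  have hRcont : Continuous (fun z : ℝ => ffun (k+2) z - φ * z) := by
    have := ffun_cont k
    fun_prop
  have hRanti : StrictAntiOn (fun z : ℝ => ffun (k+2) z - φ * z) (Set.Icc α β) := by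
    apply strictAntiOn_of_deriv_neg (convex_Icc _ _) hRcont.continuousOn
    intro x hx
    rw [interior_Icc] at hx
    rw [(hRd x).deriv]
    rcases le_or_gt x (2/((k:ℝ)+3)) with h | h
    · have h2 : gfun (k+2) x < gfun (k+2) α := by
        apply gfun_strictAntiOn k ⟨hα0.le, hα.le⟩ ⟨by linarith [hx.1], h⟩ hx.1
      rw [hgα] at h2; linarith
    · have h2 : gfun (k+2) x < gfun (k+2) β := by
        apply gfun_strictMonoOn k ⟨h.le, by linarith [hx.2]⟩ ⟨hβ.le, hβ1.le⟩ hx.2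
      rw [hgβ] at h2; linarith
  have hRmono : StrictMonoOn (fun z : ℝ => ffun (k+2) z - φ * z) (Set.Icc β (y α)) := by
    apply strictMonoOn_of_deriv_pos (convex_Icc _ _) hRcont.continuousOn
    intro x hx
    rw [interior_Icc] at hx
    rw [(hRd x).deriv]
    have h2 : gfun (k+2) β < gfun (k+2) x := by
      apply gfun_strictMonoOn k ⟨hβ.le, hβ1.le⟩ ⟨by linarith [hx.1, hβ], by linarith [hx.2, hyα1]⟩ hx.1
    rw [hgβ] at h2; linarith
  have e1 : ffun (k+2) β - φ * β < ffun (k+2) α - φ * α :=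
    hRanti ⟨le_refl α, hαβ.le⟩ ⟨hαβ.le, le_refl β⟩ hαβ
  have e2 : ffun (k+2) β - φ * β < ffun (k+2) (y α) - φ * (y α) :=
    hRmono ⟨le_refl β, hyαβ.le⟩ ⟨hyαβ.le, le_refl (y α)⟩ hyαβ
  have hbase : (a:ℝ) * ffun (k+2) α + (b:ℝ) * ffun (k+2) β
      < ((a:ℝ)+1) * ffun (k+2) α + ((b:ℝ)-1) * ffun (k+2) (y α) := by
    have e2b : ((b:ℝ)-1) * (ffun (k+2) β - φ * β) < ((b:ℝ)-1) * (ffun (k+2) (y α) - φ * (y α)) :=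
      (mul_lt_mul_iff_right₀ hBpos).mpr e2
    have hByφ : φ * (((b:ℝ)-1) * y α) = φ * (1 - ((a:ℝ)+1)*α) := by rw [hyval α]
    nlinarith [e1, e2b, hByφ, hsum]
  -- the function G and its first zero below α
  set G : ℝ → ℝ := fun x => gfun (k+2) x - gfun (k+2) (y x) with hGdef
  have hGcont : Continuous G := by
    rw [hGdef]
    exact (gfun_cont k).sub ((gfun_cont k).comp hycont)
  have hgu : gfun (k+2) (1/((k:ℝ)+3)) = 0 := by
    rw [gfun_eq]
    have h1 : (1:ℝ) - ((k:ℝ)+3) * (1/((k:ℝ)+3)) = 0 := by field_simp; norm_num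
    rw [h1, mul_zero]
  have hGu : 0 < G (1/((k:ℝ)+3)) := by
    rw [hGdef]
    simp only
    rw [hgu]
    have h1 : β < y (1/((k:ℝ)+3)) := hyαβ.trans (hyanti _ _ hTα)
    have h2 : gfun (k+2) (y (1/((k:ℝ)+3))) < 0 :=
      hgneg _ (by linarith [huc.trans hβ]) (hylt1 _ hu0)
    linarith
  have hGα : G α < 0 := by
    rw [hGdef]
    simp only
    have h2 : gfun (k+2) β < gfun (k+2) (y α) :=
      gfun_strictMonoOn k ⟨hβ.le, hβ1.le⟩ ⟨by linarith, hyα1.le⟩ hyαβ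
    rw [hgβ] at h2
    rw [hgα]
    linarith
  set Z : Set ℝ := Set.Icc (1/((k:ℝ)+3)) α ∩ {x | 0 ≤ G x} with hZdef
  have hZc : IsClosed Z := isClosed_Icc.inter (isClosed_le continuous_const hGcont)
  have hZne : Z.Nonempty := ⟨1/((k:ℝ)+3), ⟨le_refl _, hTα.le⟩, hGu.le⟩
  have hZbd : BddAbove Z := ⟨α, fun x hx => hx.1.2⟩
  set α' := sSup Z with hα'def
  have hmemZ : α' ∈ Z := hZc.csSup_mem hZne hZbd
  have hup : 1/((k:ℝ)+3) ≤ α' := hmemZ.1.1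
  have hα'le : α' ≤ α := hmemZ.1.2
  have hGα'0 : 0 ≤ G α' := hmemZ.2
  have hα'lt : α' < α := by
    rcases lt_or_eq_of_le hα'le with h | h
    · exact h
    · rw [h] at hGα'0; linarith
  have hGx : ∀ x : ℝ, α' < x → x ≤ α → G x < 0 := by
    intro x h1 h2
    by_contra h
    push_neg at h
    have hxZ : x ∈ Z := ⟨⟨le_trans hup h1.le, h2⟩, h⟩
    exact absurd (le_csSup hZbd hxZ) (not_le.mpr h1)
  have hGα' : G α' = 0 := by
    by_contra h
    have hpos : 0 < G α' := lt_of_le_of_ne hGα'0 (Ne.symm h)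
    have h1 : {x : ℝ | 0 < G x} ∈ nhds α' :=
      hGcont.continuousAt.preimage_mem_nhds (Ioi_mem_nhds hpos)
    have h3 : {x : ℝ | 0 < G x} ∈ nhdsWithin α' (Set.Ioi α') :=
      mem_nhdsWithin_of_mem_nhds h1
    have h2 : Set.Ioc α' α ∈ nhdsWithin α' (Set.Ioi α') :=
      Ioc_mem_nhdsGT_of_mem ⟨le_refl _, hα'lt⟩
    obtain ⟨x, hx1, hx2⟩ := Filter.nonempty_of_mem (Filter.inter_mem h3 h2)
    exact absurd (hGx x hx2.1 hx2.2) (not_lt.mpr hx1.le)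
  have hu_lt : 1/((k:ℝ)+3) < α' := by
    rcases lt_or_eq_of_le hup with h | h
    · exact h
    · rw [← h] at hGα'; linarith [hGu]
  have hα'0 : 0 < α' := hu0.trans hu_lt
  have hβ'β : β < y α' := hyαβ.trans (hyanti _ _ hα'lt)
  have hβ'1 : y α' < 1 := hylt1 _ hα'0
  have hgα'β' : gfun (k+2) (y α') = gfun (k+2) α' := by
    rw [hGdef] at hGα'
    simp only at hGα'
    linarith
  -- the value function Q and its strict decrease on [α', α]
  have hQd : ∀ x : ℝ, HasDerivAt
      (fun z : ℝ => ((a:ℝ)+1) * ffun (k+2) z + ((b:ℝ)-1) * ffun (k+2) (y z))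
      (((a:ℝ)+1) * G x) x := by
    intro x
    have hyd : HasDerivAt y (-(((a:ℝ)+1)/((b:ℝ)-1))) x := by
      rw [hydef]
      have h1 : HasDerivAt (fun z : ℝ => 1 - ((a:ℝ)+1)*z) (-((a:ℝ)+1)) x := by
        simpa using ((hasDerivAt_id x).const_mul ((a:ℝ)+1)).const_sub 1
      have := h1.div_const ((b:ℝ)-1)
      exact this.congr_deriv (by ring)
    have hcomp := (ffun_hasDerivAt k (y x)).comp x hyd
    have hcomp' : HasDerivAt (fun z : ℝ => ffun (k+2) (y z))
        (gfun (k+2) (y x) * -(((a:ℝ)+1)/((b:ℝ)-1))) x := hcomp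
    have h4 := ((ffun_hasDerivAt k x).const_mul ((a:ℝ)+1)).add
      (hcomp'.const_mul ((b:ℝ)-1))
    refine h4.congr_deriv ?_
    rw [hGdef]
    simp only
    field_simp
    ring
  have hQanti : StrictAntiOn
      (fun z : ℝ => ((a:ℝ)+1) * ffun (k+2) z + ((b:ℝ)-1) * ffun (k+2) (y z))
      (Set.Icc α' α) := by
    apply strictAntiOn_of_deriv_neg (convex_Icc _ _)
    · exact ((continuous_const.mul (ffun_cont k)).add
        (continuous_const.mul ((ffun_cont k).comp hycont))).continuousOn
    · intro x hx
      rw [interior_Icc] at hx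
      rw [(hQd x).deriv]
      exact mul_neg_of_pos_of_neg hApos (hGx x hx.1 hx.2.le)
  have hQlt : ((a:ℝ)+1) * ffun (k+2) α + ((b:ℝ)-1) * ffun (k+2) (y α)
      < ((a:ℝ)+1) * ffun (k+2) α' + ((b:ℝ)-1) * ffun (k+2) (y α') :=
    hQanti ⟨le_refl _, hα'lt.le⟩ ⟨hα'lt.le, le_refl _⟩ hα'lt
  refine ⟨gfun (k+2) α', α', y α', ?_, ?_, hα'0, ?_, ?_, hβ'1, rfl, hgα'β', ?_, ?_⟩
  · rw [← hgα]
    exact gfun_strictAntiOn k ⟨hα'0.le, by linarith⟩ ⟨hα0.le, hα.le⟩ hα'lt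
  · exact hgneg α' hu_lt (by linarith)
  · linarith
  · linarith
  · rw [hydef]
    field_simp
    ring
  · linarith [hbase, hQlt]
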